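/- Let M, N, K_A, K_B be naturals with K_A < K_B ≤ M and N ≤ M, and let p_j(A) = (C(K_A,j)·C(M−K_A,N−j))/C(M,N) and p_j(B) = (C(K_B,j)·C(M−K_B,N−j))/C(M,N) for j = 0,…,N. Let k* be the least k ∈ {0,…,N} with Σ_{j=0}^{k} (p_j(A) + p_j(B)) > 1 (it exists since the full sum equals 2). Assume p_{k*}(A) > 0 and p_{k*}(B) > 0, and set P* = p_{k*}(B)/(p_{k*}(A) + p_{k*}(B)). Then for every ℓ ∈ {0,…,N}: if ℓ > k* and p_ℓ(B) > 0 then P*·p_ℓ(A) < (1−P*)·p_ℓ(B), and if ℓ < k* and p_ℓ(A) > 0 then P*·p_ℓ(A) > (1−P*)·p_ℓ(B). -/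

import Mathlib

def hw (M K N j : ℕ) : ℕ := K.choose j * (M - K).choose (N - j)

lemma hw_pos_iff (M K N j : ℕ) : 0 < hw M K N j ↔ j ≤ K ∧ N ≤ M - K + j := by
  unfold hw
  rw [Nat.pos_iff_ne_zero, Nat.mul_ne_zero_iff]
  simp only [ne_eq, Nat.choose_eq_zero_iff, not_lt]
  omega

lemma hw_step (M KA KB N j : ℕ) (h1 : KA < KB) (h2 : KB ≤ M) (hjN : j + 1 ≤ N)
    (ha : 0 < hw M KA N (j+1)) (hb : 0 < hw M KB N j) :
    hw M KA N (j+1) * hw M KB N j < hw M KA N j * hw M KB N (j+1) := by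
  rw [hw_pos_iff] at ha hb
  obtain ⟨ha1, ha2⟩ := ha
  obtain ⟨hb1, hb2⟩ := hb
  set r := N - (j+1) with hr
  have hNj : N - j = r + 1 := by omega
  have e1 : KA.choose (j+1) * (j+1) = KA.choose j * (KA - j) := Nat.choose_succ_right_eq KA j
  have e2 : KB.choose (j+1) * (j+1) = KB.choose j * (KB - j) := Nat.choose_succ_right_eq KB j
  have e3 : (M-KA).choose (r+1) * (r+1) = (M-KA).choose r * (M - KA - r) :=
    Nat.choose_succ_right_eq _ r
  have e4 : (M-KB).choose (r+1) * (r+1) = (M-KB).choose r * (M - KB - r) :=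
    Nat.choose_succ_right_eq _ r
  have key : (KA - j) * (M - KB - r) < (KB - j) * (M - KA - r) := by
    have hq : KB - j = (KA - j) + (KB - KA) := by omega
    have ht : M - KA - r = (M - KB - r) + (KB - KA) := by omega
    have hp : 1 ≤ KA - j := by omega
    have hs : 1 ≤ M - KB - r := by omega
    have he : 1 ≤ KB - KA := by omega
    rw [hq, ht]
    nlinarith
  have hposA0 : 0 < KA.choose j := Nat.choose_pos (by omega)
  have hposB0 : 0 < KB.choose j := Nat.choose_pos hb1
  have hposCA0 : 0 < (M-KA).choose r := Nat.choose_pos (by omega)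
  have hposCB0 : 0 < (M-KB).choose r := Nat.choose_pos (by omega)
  have hpos : 0 < KA.choose j * KB.choose j * ((M-KA).choose r * (M-KB).choose r) :=
    Nat.mul_pos (Nat.mul_pos hposA0 hposB0) (Nat.mul_pos hposCA0 hposCB0)
  unfold hw
  rw [hNj]
  refine lt_of_mul_lt_mul_right ?_ (Nat.zero_le ((j+1)*(r+1)))
  calc KA.choose (j+1) * (M-KA).choose r * (KB.choose j * (M-KB).choose (r+1)) * ((j+1)*(r+1))
      = (KA.choose (j+1) * (j+1)) * ((M-KB).choose (r+1) * (r+1)) * ((M-KA).choose r * KB.choose j) := by ring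
    _ = (KA.choose j * (KA - j)) * ((M-KB).choose r * (M - KB - r)) * ((M-KA).choose r * KB.choose j) := by rw [e1, e4]
    _ = (KA.choose j * KB.choose j * ((M-KA).choose r * (M-KB).choose r)) * ((KA - j) * (M - KB - r)) := by ring
    _ < (KA.choose j * KB.choose j * ((M-KA).choose r * (M-KB).choose r)) * ((KB - j) * (M - KA - r)) := by
        exact mul_lt_mul_of_pos_left key hpos
    _ = (KA.choose j * ((M-KA).choose r * (M - KA - r))) * (KB.choose j * (KB - j)) * (M-KB).choose r := by ring
    _ = (KA.choose j * ((M-KA).choose (r+1) * (r+1))) * (KB.choose (j+1) * (j+1)) * (M-KB).choose r := by rw [e2, e3]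
    _ = KA.choose j * (M-KA).choose (r+1) * (KB.choose (j+1) * (M-KB).choose r) * ((j+1)*(r+1)) := by ring

lemma hw_chain (M KA KB N : ℕ) (h1 : KA < KB) (h2 : KB ≤ M) :
    ∀ l, l ≤ N → ∀ k, k < l → 0 < hw M KA N k → 0 < hw M KB N k →
    0 < hw M KA N l → 0 < hw M KB N l →
    hw M KB N k * hw M KA N l < hw M KA N k * hw M KB N l := by
  intro l
  induction l with
  | zero => intro _ k hk; omega
  | succ m ih =>
    intro hlN k hk hak hbk hal hbl
    rcases Nat.lt_or_ge k m with hkm | hkm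
    · -- k < m : get intermediate positivity
      have ham : 0 < hw M KA N m := by
        rw [hw_pos_iff] at hak hal ⊢; omega
      have hbm : 0 < hw M KB N m := by
        rw [hw_pos_iff] at hbk hbl ⊢; omega
      have hih := ih (by omega) k hkm hak hbk ham hbm
      have hstep := hw_step M KA KB N m h1 h2 hlN hal hbm
      have h3 : (hw M KB N k * hw M KA N m) * (hw M KA N (m+1) * hw M KB N m) <
          (hw M KA N k * hw M KB N m) * (hw M KA N m * hw M KB N (m+1)) := by
        apply mul_lt_mul'' hih hstep (Nat.zero_le _) (Nat.zero_le _)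
      have h4 : (hw M KB N k * hw M KA N (m+1)) * (hw M KA N m * hw M KB N m) <
          (hw M KA N k * hw M KB N (m+1)) * (hw M KA N m * hw M KB N m) := by
        calc (hw M KB N k * hw M KA N (m+1)) * (hw M KA N m * hw M KB N m)
            = (hw M KB N k * hw M KA N m) * (hw M KA N (m+1) * hw M KB N m) := by ring
          _ < (hw M KA N k * hw M KB N m) * (hw M KA N m * hw M KB N (m+1)) := h3
          _ = (hw M KA N k * hw M KB N (m+1)) * (hw M KA N m * hw M KB N m) := by ring
      exact lt_of_mul_lt_mul_right h4 (Nat.zero_le _)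
    · -- k = m
      have : k = m := by omega
      subst this
      rw [Nat.mul_comm]; exact hw_step M KA KB N k h1 h2 hlN hal hbk

/-- In the symmetric equilibrium of the Fisher game `𝔊(N,K_A,K_B,M)`, with `k*` the least
index where the cumulative sum of the two hypergeometric weight vectors exceeds `1` and
`P* = p_{k*}(B)/(p_{k*}(A)+p_{k*}(B))`, guessing `B` above the threshold and `A` below it
is strictly optimal: for `ℓ > k*` with `p_ℓ(B) > 0` one has `P*·p_ℓ(A) < (1−P*)·p_ℓ(B)`,
and for `ℓ < k*` with `p_ℓ(A) > 0` one has `P*·p_ℓ(A) > (1−P*)·p_ℓ(B)`. -/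
theorem stmt_6 (M N KA KB : ℕ) (h1 : KA < KB) (h2 : KB ≤ M) (h3 : N ≤ M)
    (pA pB : ℕ → ℝ)
    (hpA : ∀ j, pA j = ((KA.choose j : ℝ) * ((M - KA).choose (N - j) : ℝ)) / (M.choose N : ℝ))
    (hpB : ∀ j, pB j = ((KB.choose j : ℝ) * ((M - KB).choose (N - j) : ℝ)) / (M.choose N : ℝ))
    (kstar : ℕ) (hk : kstar ≤ N)
    (hgt : 1 < ∑ j ∈ Finset.range (kstar + 1), (pA j + pB j))
    (hleast : ∀ k < kstar, (∑ j ∈ Finset.range (k + 1), (pA j + pB j)) ≤ 1)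
    (hA : 0 < pA kstar) (hB : 0 < pB kstar)
    (Pstar : ℝ) (hP : Pstar = pB kstar / (pA kstar + pB kstar)) :
    ∀ ℓ ≤ N,
      (kstar < ℓ → 0 < pB ℓ → Pstar * pA ℓ < (1 - Pstar) * pB ℓ) ∧
      (ℓ < kstar → 0 < pA ℓ → (1 - Pstar) * pB ℓ < Pstar * pA ℓ) := by
  have hC : (0:ℝ) < (M.choose N : ℝ) := by
    exact_mod_cast Nat.choose_pos h3
  have hpA' : ∀ j, pA j = (hw M KA N j : ℝ) / (M.choose N : ℝ) := by
    intro j; rw [hpA j]; unfold hw; push_cast; ring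
  have hpB' : ∀ j, pB j = (hw M KB N j : ℝ) / (M.choose N : ℝ) := by
    intro j; rw [hpB j]; unfold hw; push_cast; ring
  -- real positivity ↔ nat positivity
  have hposA : ∀ j, 0 < pA j ↔ 0 < hw M KA N j := by
    intro j; rw [hpA' j, div_pos_iff]
    constructor
    · rintro (⟨h, _⟩ | ⟨_, h⟩) <;> [exact_mod_cast h; linarith]
    · intro h; exact Or.inl ⟨by exact_mod_cast h, hC⟩
  have hposB : ∀ j, 0 < pB j ↔ 0 < hw M KB N j := by
    intro j; rw [hpB' j, div_pos_iff]
    constructor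
    · rintro (⟨h, _⟩ | ⟨_, h⟩) <;> [exact_mod_cast h; linarith]
    · intro h; exact Or.inl ⟨by exact_mod_cast h, hC⟩
  have haK : 0 < hw M KA N kstar := (hposA kstar).1 hA
  have hbK : 0 < hw M KB N kstar := (hposB kstar).1 hB
  have hS : (0:ℝ) < pA kstar + pB kstar := by linarith
  have h1mP : 1 - Pstar = pA kstar / (pA kstar + pB kstar) := by
    rw [hP]; field_simp; ring
  -- reduce goal to cross-products
  have hreduce : ∀ (x y : ℝ), pB kstar * x < pA kstar * y → Pstar * x < (1 - Pstar) * y := by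
    intro x y hxy
    rw [h1mP, hP, div_mul_eq_mul_div, div_mul_eq_mul_div]
    exact (div_lt_div_iff_of_pos_right hS).mpr hxy
  have hreduce' : ∀ (x y : ℝ), pA kstar * y < pB kstar * x → (1 - Pstar) * y < Pstar * x := by
    intro x y hxy
    rw [h1mP, hP, div_mul_eq_mul_div, div_mul_eq_mul_div]
    exact (div_lt_div_iff_of_pos_right hS).mpr hxy
  -- reduce real cross products to nat cross products
  have hCC : (0:ℝ) < (M.choose N : ℝ) * (M.choose N : ℝ) := mul_pos hC hC
  have hcast : ∀ (u v x y : ℕ), u * x < v * y →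
      (u : ℝ) / (M.choose N : ℝ) * ((x : ℝ) / (M.choose N : ℝ)) <
      (v : ℝ) / (M.choose N : ℝ) * ((y : ℝ) / (M.choose N : ℝ)) := by
    intro u v x y hxy
    rw [div_mul_div_comm, div_mul_div_comm]
    refine (div_lt_div_iff_of_pos_right hCC).mpr ?_
    exact_mod_cast hxy
  intro ℓ hℓ
  constructor
  · intro hlt hpBl
    have hbL : 0 < hw M KB N ℓ := (hposB ℓ).1 hpBl
    apply hreduce
    rw [hpA' ℓ, hpB' ℓ, hpA' kstar, hpB' kstar]
    apply hcast
    rcases Nat.eq_zero_or_pos (hw M KA N ℓ) with h0 | haL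
    · rw [h0, Nat.mul_zero]
      exact Nat.mul_pos haK hbL
    · exact hw_chain M KA KB N h1 h2 ℓ hℓ kstar hlt haK hbK haL hbL
  · intro hlt hpAl
    have haL : 0 < hw M KA N ℓ := (hposA ℓ).1 hpAl
    apply hreduce'
    rw [hpA' ℓ, hpB' ℓ, hpA' kstar, hpB' kstar]
    apply hcast
    rcases Nat.eq_zero_or_pos (hw M KB N ℓ) with h0 | hbL
    · rw [h0, Nat.mul_zero]
      exact Nat.mul_pos hbK haL
    · have h5 := hw_chain M KA KB N h1 h2 kstar hk ℓ hlt haL hbL haK hbK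
      calc hw M KA N kstar * hw M KB N ℓ = hw M KB N ℓ * hw M KA N kstar := Nat.mul_comm _ _
        _ < hw M KA N ℓ * hw M KB N kstar := h5
        _ = hw M KB N kstar * hw M KA N ℓ := Nat.mul_comm _ _
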